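/- Let η be a substitution and u a two-sided periodic point with growing seed. The map rep_u : ℤ → {0,1}D* is strictly increasing with respect to the total order ≺ on {0,1}D*. In particular, rep_u is injective. -/

import Mathlib

open Filter List

variable {A : Type*}

/-- A substitution applied to a word: concatenation of the images of its letters. -/
def substW (η : A → List A) (w : List A) : List A := (w.map η).flatten

/-- The `k`-th iterate of a substitution applied to a word. -/
def iterW (η : A → List A) (k : ℕ) (w : List A) : List A := (substW η)^[k] w

/-- `η` is a substitution: nonempty images and at least one growing letter. -/
def IsSubstitution (η : A → List A) : Prop :=
  (∀ c, η c ≠ []) ∧ ∃ a, Tendsto (fun k => (iterW η k [a]).length) atTop atTop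

/-- `(m i, a i)` for `i = 0, …, len-1` is an `x`-admissible sequence:
`m (i) ++ [a i]` is a prefix of `η (a (i+1))` and `m (len-1) ++ [a (len-1)]`
is a prefix of `η x`. -/
def AdmSeq (η : A → List A) (len : ℕ) (m : ℕ → List A) (a : ℕ → A) (x : A) : Prop :=
  (∀ i, i + 1 < len → (m i ++ [a i]) <+: η (a (i + 1))) ∧
  (1 ≤ len → (m (len - 1) ++ [a (len - 1)]) <+: η x)

/-- `Σ_{j<k} |η^j(m_j)|`. -/
def sumLen (η : A → List A) (k : ℕ) (m : ℕ → List A) : ℕ :=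
  ∑ j ∈ Finset.range k, (iterW η j (m j)).length

/-- `η^{k-1}(m_{k-1}) η^{k-2}(m_{k-2}) ⋯ η^0(m_0)`. -/
def concatDT (η : A → List A) (k : ℕ) (m : ℕ → List A) : List A :=
  ((List.range k).reverse.map (fun j => iterW η j (m j))).flatten

/-- The digit word `|m_{k-1}| ⊙ |m_{k-2}| ⊙ ⋯ ⊙ |m_0|`. -/
def dtDigits (k : ℕ) (m : ℕ → List A) : List ℕ :=
  (List.range k).reverse.map (fun j => (m j).length)

/-- Partial run of the automaton `A_{η,x}`: from state `x`, the digit `d`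
moves to the `d`-th letter of `η x` when `d < |η x|`. -/
def run (η : A → List A) : List ℕ → A → Option A
  | [], x => some x
  | d :: w, x => if h : d < (η x).length then run η w ((η x)[d]) else none

/-- `u` restricted to nonnegative positions is a periodic point of `η` of period `p`:
every `η^p`-image of a prefix of `u` is again a prefix of `u`. -/
def RightPer (η : A → List A) (p : ℕ) (u : ℤ → A) : Prop :=
  ∀ n : ℕ, ∀ j : ℕ, j < (iterW η p (List.ofFn (fun i : Fin (n+1) => u i))).length →
    (iterW η p (List.ofFn (fun i : Fin (n+1) => u i)))[j]? = some (u j)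

/-- `u` restricted to negative positions is a periodic point of `η` of period `p`:
every `η^p`-image of a suffix `u_{-(n+1)} ⋯ u_{-1}` of the left part is again a
suffix of the left part of `u`. -/
def LeftPer (η : A → List A) (p : ℕ) (u : ℤ → A) : Prop :=
  ∀ n : ℕ, ∀ j : ℕ,
    j < (iterW η p (List.ofFn (fun i : Fin (n+1) => u ((i : ℤ) - (n+1))))).length →
    (iterW η p (List.ofFn (fun i : Fin (n+1) => u ((i : ℤ) - (n+1)))))[j]? =
      some (u ((j : ℤ) -
        (iterW η p (List.ofFn (fun i : Fin (n+1) => u ((i : ℤ) - (n+1))))).length))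

/-- `u : ℤ → A` is a two-sided periodic point of `η` of period `p ≥ 1` with
growing seed `u₋₁ | u₀`. -/
def TwoSidedPerPoint (η : A → List A) (p : ℕ) (u : ℤ → A) : Prop :=
  1 ≤ p ∧ RightPer η p u ∧ LeftPer η p u ∧
  Tendsto (fun k => (iterW η k [u 0]).length) atTop atTop ∧
  Tendsto (fun k => (iterW η k [u (-1)]).length) atTop atTop

/-- The Dumont–Thomas decomposition data of a positive integer `n` with respect to
the letter `x` (Theorem of Dumont–Thomas for the right-infinite part):
`p ∣ k`, `p ≤ k`, the sequence is `x`-admissible, `m_{k-1} ⋯ m_{k-p} ≠ ε` and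
`Σ_{j<k} |η^j(m_j)| = n`. -/
def PosSpec (η : A → List A) (p : ℕ) (x : A) (n : ℤ) (k : ℕ) (m : ℕ → List A)
    (a : ℕ → A) : Prop :=
  p ∣ k ∧ p ≤ k ∧ AdmSeq η k m a x ∧ (∃ i, i < p ∧ m (k - 1 - i) ≠ []) ∧
  (sumLen η k m : ℤ) = n

/-- The Dumont–Thomas decomposition data of an integer `n ≤ -2` with respect to
the letter `b` (Theorem of Dumont–Thomas for the left-infinite part). -/
def NegSpec (η : A → List A) (p : ℕ) (b : A) (n : ℤ) (k : ℕ) (m : ℕ → List A)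
    (a : ℕ → A) : Prop :=
  p ∣ k ∧ p ≤ k ∧ AdmSeq η k m a b ∧
  ((List.range p).map (fun i => iterW η (p - 1 - i) (m (k - 1 - i)))).flatten
      ++ [a (k - p)] ≠ iterW η p [b] ∧
  (sumLen η k m : ℤ) = n + (iterW η k [b]).length

/-- `w` is the Dumont–Thomas complement representation `rep_u(n)` of `n ∈ ℤ`. -/
def RepSpec (η : A → List A) (p : ℕ) (u : ℤ → A) (n : ℤ) (w : List ℕ) : Prop :=
  (n = 0 ∧ w = [0]) ∨ (n = -1 ∧ w = [1]) ∨
  (1 ≤ n ∧ ∃ k m a, PosSpec η p (u 0) n k m a ∧ w = 0 :: dtDigits k m) ∨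
  (n ≤ -2 ∧ ∃ k m a, NegSpec η p (u (-1)) n k m a ∧ w = 1 :: dtDigits k m)

/-- Run of the automaton `A_{η,s}` with initial state `start`: the first digit
`0` (resp. `1`) moves to `u 0` (resp. `u (-1)`). -/
def runSeed (η : A → List A) (u : ℤ → A) : List ℕ → Option A
  | [] => none
  | d :: w => if d = 0 then run η w (u 0) else if d = 1 then run η w (u (-1)) else none

/-- `|η^{k-p-1}(m_{k-1}) ⋯ η^0(m_p)|`, the `u`-quotient of a positive integer. -/
def uQuotPos (η : A → List A) (p k : ℕ) (m : ℕ → List A) : ℤ :=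
  ∑ j ∈ Finset.range (k - p), ((iterW η j (m (j + p))).length : ℤ)

/-- `w = tail_{η,p,x}(n)`: the digit word of the unique `x`-admissible sequence of
length `p` whose length-sum is `n`. -/
def TailSpec (η : A → List A) (p : ℕ) (x : A) (n : ℕ) (w : List ℕ) : Prop :=
  ∃ m a, AdmSeq η p m a x ∧ sumLen η p m = n ∧ w = dtDigits p m

/-- Radix order: shorter words first, ties broken lexicographically. -/
def radLt (v w : List ℕ) : Prop :=
  v.length < w.length ∨ (v.length = w.length ∧ List.Lex (· < ·) v w)

/-- Reversed-radix order: longer words first, ties broken lexicographically. -/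
def revLt (v w : List ℕ) : Prop :=
  w.length < v.length ∨ (v.length = w.length ∧ List.Lex (· < ·) v w)

/-- The total order `≺` on `{0,1}D*`. -/
def precLt (v w : List ℕ) : Prop :=
  (v.head? = some 1 ∧ w.head? = some 0) ∨
  (v.head? = some 0 ∧ w.head? = some 0 ∧ radLt v w) ∨
  (v.head? = some 1 ∧ w.head? = some 1 ∧ revLt v w)

/-- The base-2 value `Σ_{i<k} w_i 2^i` of the word `w = w_{k-1} ⋯ w_0`. -/
def natVal2 (w : List ℕ) : ℕ := w.foldl (fun acc d => 2 * acc + d) 0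

/-- The two's complement value `Σ_{i<k} w_i 2^i − w_{k-1} 2^k`. -/
def val2c (w : List ℕ) : ℤ := (natVal2 w : ℤ) - (w.headI : ℤ) * 2 ^ w.length

/-- Fibonacci numbers with `F 0 = 1`, `F 1 = 2`. -/
def fib2 : ℕ → ℕ
  | 0 => 1
  | 1 => 2
  | n + 2 => fib2 (n + 1) + fib2 n

/-- The Fibonacci complement value `Σ_{i<k} w_i F_i − w_{k-1} F_k`
of the word `w = w_{k-1} ⋯ w_0`. -/
def valFc (w : List ℕ) : ℤ :=
  (∑ i ∈ Finset.range w.length, (w.reverse.getD i 0 : ℤ) * fib2 i) -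
    (w.headI : ℤ) * fib2 w.length

section AuxDT
variable {η : A → List A}

lemma substW_append (v w : List A) : substW η (v ++ w) = substW η v ++ substW η w := by
  simp [substW]

lemma substW_singleton (x : A) : substW η [x] = η x := by simp [substW]

lemma substW_nil : substW η [] = [] := rfl

lemma iterW_zero (w : List A) : iterW η 0 w = w := rfl

lemma iterW_succ (k : ℕ) (w : List A) : iterW η (k+1) w = iterW η k (substW η w) := by
  simp [iterW, Function.iterate_succ_apply]

lemma iterW_succ' (k : ℕ) (w : List A) : iterW η (k+1) w = substW η (iterW η k w) := by
  simp [iterW, Function.iterate_succ_apply']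

lemma iterW_add (q k : ℕ) (w : List A) : iterW η (q + k) w = iterW η q (iterW η k w) := by
  simp [iterW, Function.iterate_add_apply]

lemma iterW_nil (k : ℕ) : iterW η k ([] : List A) = [] := by
  induction k with
  | zero => rfl
  | succ k ih => rw [iterW_succ', ih, substW_nil]

lemma iterW_append (k : ℕ) (v w : List A) :
    iterW η k (v ++ w) = iterW η k v ++ iterW η k w := by
  induction k generalizing v w with
  | zero => rfl
  | succ k ih => rw [iterW_succ', iterW_succ', iterW_succ', ih, substW_append]

lemma iterW_singleton_succ (k : ℕ) (x : A) : iterW η (k+1) [x] = iterW η k (η x) := by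
  rw [iterW_succ, substW_singleton]

variable (hne : ∀ c, η c ≠ [])

include hne in
lemma substW_ne_nil {w : List A} (hw : w ≠ []) : substW η w ≠ [] := by
  cases w with
  | nil => simp at hw
  | cons a t => simp [substW, hne a]

include hne in
lemma iterW_ne_nil (k : ℕ) {w : List A} (hw : w ≠ []) : iterW η k w ≠ [] := by
  induction k with
  | zero => exact hw
  | succ k ih => rw [iterW_succ']; exact substW_ne_nil hne ih

include hne in
lemma one_le_length_iterW (k : ℕ) (x : A) : 1 ≤ (iterW η k [x]).length :=
  List.length_pos_iff.2 (iterW_ne_nil hne k (by simp))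

include hne in
lemma length_le_substW (w : List A) : w.length ≤ (substW η w).length := by
  induction w with
  | nil => simp [substW]
  | cons a t ih =>
    have : substW η (a :: t) = η a ++ substW η t := by simp [substW]
    have h1 : 1 ≤ (η a).length := List.length_pos_iff.2 (hne a)
    simp only [this, List.length_append, List.length_cons]
    omega

include hne in
lemma length_iterW_le_iterW {j k : ℕ} (hjk : j ≤ k) (w : List A) :
    (iterW η j w).length ≤ (iterW η k w).length := by
  induction k with
  | zero => simp_all
  | succ k ih =>
    rcases Nat.lt_succ_iff_lt_or_eq.1 (Nat.lt_succ_of_le hjk) with h | rfl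
    · calc (iterW η j w).length ≤ (iterW η k w).length := ih (by omega)
        _ ≤ _ := by rw [iterW_succ']; exact length_le_substW hne _
    · exact le_rfl

lemma prefix_append_left {α : Type*} (l : List α) {v w : List α} (h : v <+: w) :
    l ++ v <+: l ++ w := by
  obtain ⟨t, rfl⟩ := h; exact ⟨t, by simp⟩

lemma iterW_prefix {v w : List A} (h : v <+: w) (η : A → List A) (k : ℕ) :
    iterW η k v <+: iterW η k w := by
  obtain ⟨t, rfl⟩ := h; rw [iterW_append]; exact ⟨iterW η k t, rfl⟩

lemma AdmSeq.trunc {η : A → List A} {k : ℕ} {m : ℕ → List A} {a : ℕ → A} {x : A}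
    (h : AdmSeq η k m a x) {c : ℕ} (hc : c < k) : AdmSeq η c m a (a c) := by
  constructor
  · intro i hi; exact h.1 i (by omega)
  · intro hc1
    have h2 := h.1 (c - 1) (by omega)
    rwa [Nat.sub_add_cancel hc1] at h2

lemma AdmSeq.shift {η : A → List A} {q p : ℕ} {m : ℕ → List A} {a : ℕ → A} {x : A}
    (h : AdmSeq η (q + p) m a x) :
    AdmSeq η p (fun i => m (i + q)) (fun i => a (i + q)) x := by
  constructor
  · intro i hi
    have h2 := h.1 (i + q) (by omega)
    simpa [Nat.add_right_comm] using h2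
  · intro hp1
    have h2 := h.2 (by omega)
    have e : p - 1 + q = q + p - 1 := by omega
    simpa [e] using h2

lemma sumLen_zero (η : A → List A) (m : ℕ → List A) : sumLen η 0 m = 0 := by
  simp [sumLen]

lemma sumLen_succ (η : A → List A) (k : ℕ) (m : ℕ → List A) :
    sumLen η (k+1) m = sumLen η k m + (iterW η k (m k)).length := by
  simp [sumLen, Finset.sum_range_succ]

lemma sumLen_add (η : A → List A) (q r : ℕ) (m : ℕ → List A) :
    sumLen η (q + r) m =
      sumLen η q m + ∑ i ∈ Finset.range r, (iterW η (q + i) (m (q + i))).length := by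
  induction r with
  | zero => simp [sumLen]
  | succ r ih =>
    rw [← Nat.add_assoc, sumLen_succ, ih, Finset.sum_range_succ]
    omega

lemma dtDigits_succ (k : ℕ) (m : ℕ → List A) :
    dtDigits (k+1) m = (m k).length :: dtDigits k m := by
  simp [dtDigits, List.range_succ]

lemma dtDigits_length (k : ℕ) (m : ℕ → List A) : (dtDigits k m).length = k := by
  simp [dtDigits]

lemma concatDT_zero (η : A → List A) (m : ℕ → List A) : concatDT η 0 m = [] := by
  simp [concatDT]

lemma concatDT_succ (η : A → List A) (k : ℕ) (m : ℕ → List A) :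
    concatDT η (k+1) m = iterW η k (m k) ++ concatDT η k m := by
  simp [concatDT, List.range_succ]

lemma length_iterW_concatDT (η : A → List A) (q k : ℕ) (m : ℕ → List A) :
    (iterW η q (concatDT η k m)).length
      = ∑ i ∈ Finset.range k, (iterW η (q + i) (m i)).length := by
  induction k with
  | zero => simp [concatDT_zero, iterW_nil]
  | succ k ih =>
    rw [concatDT_succ, iterW_append, List.length_append, ih, Finset.sum_range_succ,
      ← iterW_add]
    omega

lemma concatDT_length (η : A → List A) (k : ℕ) (m : ℕ → List A) :
    (concatDT η k m).length = sumLen η k m := by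
  have := length_iterW_concatDT η 0 k m
  simpa [iterW_zero, sumLen] using this

lemma sumLen_succ_le : ∀ (k : ℕ) (m : ℕ → List A) (a : ℕ → A) (x : A),
    AdmSeq η k m a x → sumLen η k m + 1 ≤ (iterW η k [x]).length := by
  intro k
  induction k with
  | zero => intro m a x _; simp [sumLen_zero, iterW_zero]
  | succ k ih =>
    intro m a x h
    have htop := h.2 (by omega)
    simp only [Nat.add_sub_cancel] at htop
    have hpre : iterW η k (m k) ++ iterW η k [a k] <+: iterW η (k+1) [x] := by
      rw [iterW_singleton_succ, ← iterW_append]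
      exact iterW_prefix htop η k
    have hlen := hpre.length_le
    rw [List.length_append] at hlen
    have h2 := ih m a (a k) (h.trunc (Nat.lt_succ_self k))
    rw [sumLen_succ]
    omega

lemma lex_of_sumLen_lt : ∀ (k : ℕ) (m : ℕ → List A) (a : ℕ → A) (m' : ℕ → List A)
    (a' : ℕ → A) (x : A), AdmSeq η k m a x → AdmSeq η k m' a' x →
    sumLen η k m < sumLen η k m' →
    List.Lex (· < ·) (dtDigits k m) (dtDigits k m') := by
  intro k
  induction k with
  | zero => intro m a m' a' x _ _ hs; simp [sumLen_zero] at hs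
  | succ k ih =>
    intro m a m' a' x h h' hs
    have htop := h.2 (by omega)
    have htop' := h'.2 (by omega)
    simp only [Nat.add_sub_cancel] at htop htop'
    rw [dtDigits_succ, dtDigits_succ]
    rcases lt_trichotomy (m k).length (m' k).length with hlt | heq | hgt
    · exact List.Lex.rel hlt
    · have e : m k ++ [a k] = m' k ++ [a' k] := by
        have h12 := List.prefix_of_prefix_length_le htop htop' (by simp [heq])
        exact h12.eq_of_length (by simp [heq])
      obtain ⟨e1, e2⟩ := List.append_inj' e (by simp)
      have e3 : a k = a' k := by simpa using e2
      rw [e1]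
      refine List.Lex.cons ?_
      refine ih m a m' a' (a k) (h.trunc (Nat.lt_succ_self k))
        (e3 ▸ h'.trunc (Nat.lt_succ_self k)) ?_
      rw [sumLen_succ, sumLen_succ, e1] at hs
      omega
    · exfalso
      have hmk : m k <+: η x := (List.prefix_append _ _).trans htop
      have hq : m' k ++ [a' k] <+: m k :=
        List.prefix_of_prefix_length_le htop' hmk (by simp; omega)
      have hq2 := (iterW_prefix hq η k).length_le
      rw [iterW_append, List.length_append] at hq2
      have h2 := sumLen_succ_le k m' a' (a' k) (h'.trunc (Nat.lt_succ_self k))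
      rw [sumLen_succ, sumLen_succ] at hs
      omega

lemma concatDT_prefix : ∀ (k : ℕ) (m : ℕ → List A) (a : ℕ → A) (x : A),
    AdmSeq η k m a x → 1 ≤ k →
    concatDT η k m ++ [a 0] <+: iterW η k [x] := by
  intro k
  induction k with
  | zero => omega
  | succ k ih =>
    intro m a x h _
    rcases Nat.eq_zero_or_pos k with rfl | hk
    · have htop := h.2 (by omega)
      simpa [concatDT_succ, concatDT_zero, iterW_zero, iterW_singleton_succ]
        using htop
    · have htop := h.2 (by omega)
      simp only [Nat.add_sub_cancel] at htop
      have ih2 := ih m a (a k) (h.trunc (Nat.lt_succ_self k)) hk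
      have hpre : iterW η k (m k) ++ iterW η k [a k] <+: iterW η (k+1) [x] := by
        rw [iterW_singleton_succ, ← iterW_append]
        exact iterW_prefix htop η k
      rw [concatDT_succ, List.append_assoc]
      exact ((prefix_append_left (iterW η k (m k)) ih2).trans hpre)

lemma range_reverse_eq (n : ℕ) :
    (List.range n).reverse = (List.range n).map (fun i => n - 1 - i) := by
  rw [List.range_eq_range', List.reverse_range']
  simp [List.range_eq_range']

lemma lex_irrefl (l : List ℕ) : ¬ List.Lex (· < ·) l l := by
  induction l with
  | nil => intro hl; cases hl
  | cons a t ih =>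
    intro hl
    cases hl with
    | rel h => omega
    | cons h => exact ih h

lemma precLt_irrefl (w : List ℕ) : ¬ precLt w w := by
  rintro (⟨h1, h2⟩ | ⟨_, _, h | ⟨_, h⟩⟩ | ⟨_, _, h | ⟨_, h⟩⟩)
  · rw [h1] at h2; simp at h2
  · omega
  · exact lex_irrefl _ h
  · omega
  · exact lex_irrefl _ h

include hne in
lemma pos_main {p : ℕ} (hp : 1 ≤ p) {x : A} (hx : ∃ t, iterW η p [x] = x :: t)
    {mv nv : ℤ} {k1 k2 : ℕ} {m1 m2 : ℕ → List A} {a1 a2 : ℕ → A}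
    (hm : PosSpec η p x mv k1 m1 a1) (hn : PosSpec η p x nv k2 m2 a2)
    (hlt : mv < nv) :
    radLt (0 :: dtDigits k1 m1) (0 :: dtDigits k2 m2) := by
  obtain ⟨hd1, hp1, ha1, hnz1, hs1⟩ := hm
  obtain ⟨hd2, hp2, ha2, hnz2, hs2⟩ := hn
  rcases lt_trichotomy k1 k2 with hk | rfl | hk
  · left; simp only [List.length_cons, dtDigits_length]; omega
  · right
    refine ⟨by simp [dtDigits_length], List.Lex.cons ?_⟩
    have hs : sumLen η k1 m1 < sumLen η k1 m2 := by omega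
    exact lex_of_sumLen_lt k1 m1 a1 m2 a2 x ha1 ha2 hs
  · exfalso
    have hkp : k2 + p ≤ k1 := by
      have hdv : p ∣ k1 - k2 := Nat.dvd_sub hd1 hd2
      have := Nat.le_of_dvd (by omega) hdv
      omega
    obtain ⟨q, rfl⟩ : ∃ q, k1 = q + p := ⟨k1 - p, by omega⟩
    have hsh : AdmSeq η p (fun i => m1 (i + q)) (fun i => a1 (i + q)) x := ha1.shift
    set m1' : ℕ → List A := fun i => m1 (i + q) with hm1'
    have htel := concatDT_prefix p m1' (fun i => a1 (i + q)) x hsh hp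
    have hFpre : concatDT η p m1' <+: iterW η p [x] :=
      (List.prefix_append _ _).trans htel
    -- F is nonempty
    obtain ⟨i0, hi0, hne0⟩ := hnz1
    have hidx : p - 1 - i0 + q = q + p - 1 - i0 := by omega
    have hne0' : m1' (p - 1 - i0) ≠ [] := by
      rw [hm1']; simpa [hidx] using hne0
    have hlen0 : 1 ≤ (iterW η (p - 1 - i0) (m1' (p - 1 - i0))).length :=
      List.length_pos_iff.2 (iterW_ne_nil hne _ hne0')
    have hFlen : 1 ≤ (concatDT η p m1').length := by
      rw [concatDT_length]
      calc 1 ≤ (iterW η (p - 1 - i0) (m1' (p - 1 - i0))).length := hlen0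
        _ ≤ sumLen η p m1' :=
          Finset.single_le_sum (f := fun j => (iterW η j (m1' j)).length)
            (fun i _ => Nat.zero_le _) (Finset.mem_range.2 (by omega))
    -- F starts with x
    obtain ⟨t, ht⟩ := hx
    obtain ⟨s, hFs⟩ := hFpre
    have hFx : ∃ F', concatDT η p m1' = x :: F' := by
      rcases hcase : concatDT η p m1' with _ | ⟨f0, F'⟩
      · rw [hcase] at hFlen; simp at hFlen
      · rw [hcase, ht] at hFs
        refine ⟨F', ?_⟩
        have : f0 = x := by
          have := congrArg (fun l => l.head?) hFs
          simpa using this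
        rw [this]
    obtain ⟨F', hFx⟩ := hFx
    -- length bounds
    have hsplit := sumLen_add η q p m1
    have hcon := length_iterW_concatDT η q p m1'
    have hcongr : ∑ i ∈ Finset.range p, (iterW η (q + i) (m1' i)).length
        = ∑ i ∈ Finset.range p, (iterW η (q + i) (m1 (q + i))).length := by
      exact Finset.sum_congr rfl fun i _ => by simp [hm1', Nat.add_comm i q]
    have hqF : (iterW η q [x]).length ≤ (iterW η q (concatDT η p m1')).length := by
      rw [hFx, show x :: F' = [x] ++ F' from rfl, iterW_append, List.length_append]
      omega
    have hmono : (iterW η k2 [x]).length ≤ (iterW η q [x]).length :=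
      length_iterW_le_iterW hne (by omega) [x]
    have hnb := sumLen_succ_le k2 m2 a2 x ha2
    omega

include hne in
lemma neg_main {p : ℕ} (hp : 1 ≤ p) {b : A} (hb : ∃ s, iterW η p [b] = s ++ [b])
    {mv nv : ℤ} {k1 k2 : ℕ} {m1 m2 : ℕ → List A} {a1 a2 : ℕ → A}
    (hm : NegSpec η p b mv k1 m1 a1) (hn : NegSpec η p b nv k2 m2 a2)
    (hlt : mv < nv) :
    revLt (1 :: dtDigits k1 m1) (1 :: dtDigits k2 m2) := by
  obtain ⟨hd1, hp1, ha1, hc1, hs1⟩ := hm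
  obtain ⟨hd2, hp2, ha2, hc2, hs2⟩ := hn
  rcases lt_trichotomy k2 k1 with hk | rfl | hk
  · left; simp only [List.length_cons, dtDigits_length]; omega
  · right
    refine ⟨by simp [dtDigits_length], List.Lex.cons ?_⟩
    have hs : sumLen η k2 m1 < sumLen η k2 m2 := by omega
    exact lex_of_sumLen_lt k2 m1 a1 m2 a2 b ha1 ha2 hs
  · exfalso
    have hkp : k1 + p ≤ k2 := by
      have hdv : p ∣ k2 - k1 := Nat.dvd_sub hd2 hd1
      have := Nat.le_of_dvd (by omega) hdv
      omega
    obtain ⟨q, rfl⟩ : ∃ q, k2 = q + p := ⟨k2 - p, by omega⟩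
    have hsh : AdmSeq η p (fun i => m2 (i + q)) (fun i => a2 (i + q)) b := ha2.shift
    set m2' : ℕ → List A := fun i => m2 (i + q) with hm2'
    have htel := concatDT_prefix p m2' (fun i => a2 (i + q)) b hsh hp
    simp only [Nat.zero_add] at htel
    -- identify concatDT with the NegSpec flatten
    have hflat : concatDT η p m2'
        = ((List.range p).map (fun i => iterW η (p - 1 - i) (m2 (q + p - 1 - i)))).flatten := by
      rw [concatDT, range_reverse_eq, List.map_map]
      congr 1
      refine List.map_congr_left fun i hi => ?_
      have hip : i < p := List.mem_range.1 hi
      simp only [Function.comp_apply, hm2']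
      congr 2
      omega
    have hD : ((List.range p).map
          (fun i => iterW η (p - 1 - i) (m2 (q + p - 1 - i)))).flatten
        ++ [a2 (q + p - p)] <+: iterW η p [b] := by
      rw [show q + p - p = q by omega, ← hflat]
      exact htel
    obtain ⟨s, hDs⟩ := hD
    have hsne : s ≠ [] := by
      intro hsnil
      rw [hsnil, List.append_nil] at hDs
      exact hc2 (by rw [show q + p - p = q by omega] at hDs ⊢; exact hDs)
    -- s ends with b
    obtain ⟨w', hw'⟩ := hb
    obtain ⟨s', hsdec⟩ : ∃ s', s = s' ++ [b] := by
      have h2 : (iterW η p [b]).getLast? = some b := by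
        rw [hw']; exact List.getLast?_concat
      rw [← hDs, List.getLast?_append] at h2
      have h3 : s.getLast? = some b := by
        rcases List.eq_nil_or_concat s with rfl | ⟨s'', c, hc⟩
        · exact absurd rfl hsne
        · subst hc
          simp only [List.concat_eq_append, List.getLast?_concat] at h2 ⊢
          simpa using h2
      exact List.getLast?_eq_some_iff.1 h3
    -- length computations at level q
    have hwhole : iterW η (q + p) [b] = iterW η q (concatDT η p m2')
        ++ iterW η q [a2 q] ++ iterW η q s := by
      rw [iterW_add q p [b], ← hDs, hflat]
      rw [show q + p - p = q by omega]
      rw [iterW_append, iterW_append]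
    have hlens := congrArg List.length hwhole
    simp only [List.length_append] at hlens
    have hcon := length_iterW_concatDT η q p m2'
    have hcongr : ∑ i ∈ Finset.range p, (iterW η (q + i) (m2' i)).length
        = ∑ i ∈ Finset.range p, (iterW η (q + i) (m2 (q + i))).length := by
      exact Finset.sum_congr rfl fun i _ => by simp [hm2', Nat.add_comm i q]
    have hsplit := sumLen_add η q p m2
    have htr : AdmSeq η q m2 a2 (a2 q) := ha2.trunc (by omega)
    have hqa := sumLen_succ_le q m2 a2 (a2 q) htr
    have hqs : (iterW η q [b]).length ≤ (iterW η q s).length := by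
      rw [hsdec, iterW_append, List.length_append]
      omega
    have hmono : (iterW η k1 [b]).length ≤ (iterW η q [b]).length :=
      length_iterW_le_iterW hne (by omega) [b]
    have hnn : 0 ≤ (sumLen η k1 m1 : ℤ) := by positivity
    omega

lemma head_fact {η : A → List A} (hne : ∀ c, η c ≠ []) {p : ℕ} {u : ℤ → A}
    (hR : RightPer η p u) : ∃ t, iterW η p [u 0] = u 0 :: t := by
  have h0 := hR 0 0
  norm_num [List.ofFn_succ] at h0
  have hlen : 0 < (iterW η p [u 0]).length :=
    List.length_pos_iff.2 (iterW_ne_nil hne p (by simp))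
  have h1 := h0 hlen
  rcases hcase : iterW η p [u 0] with _ | ⟨c, t⟩
  · rw [hcase] at hlen; simp at hlen
  · rw [hcase] at h1
    simp only [List.getElem?_cons_zero, Option.some_inj] at h1
    exact ⟨t, by rw [h1]⟩

lemma last_fact {η : A → List A} (hne : ∀ c, η c ≠ []) {p : ℕ} {u : ℤ → A}
    (hL : LeftPer η p u) : ∃ s, iterW η p [u (-1)] = s ++ [u (-1)] := by
  have h0 := hL 0
  norm_num [List.ofFn_succ] at h0
  set l := iterW η p [u (-1)] with hl
  have hlnil : l ≠ [] := iterW_ne_nil hne p (by simp)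
  have hlen : 1 ≤ l.length := List.length_pos_iff.2 hlnil
  have h1 := h0 (l.length - 1) (by omega)
  have e2 : ((l.length - 1 : ℕ) : ℤ) - (l.length : ℤ) = -1 := by
    have := Nat.cast_sub (R := ℤ) hlen
    omega
  rw [e2] at h1
  have h3 : l.getLast? = some (u (-1)) := by
    rw [List.getLast?_eq_getElem?]
    exact h1
  exact List.getLast?_eq_some_iff.1 h3

end AuxDT

/-- The map `rep_u : ℤ → {0,1}D*` is strictly increasing with
respect to the total order `≺`; in particular it is injective. -/
theorem rep_strict_mono [Finite A] (η : A → List A) (hη : IsSubstitution η)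
    (p : ℕ) (u : ℤ → A) (hu : TwoSidedPerPoint η p u) :
    ∀ (m n : ℤ) (wm wn : List ℕ),
      RepSpec η p u m wm → RepSpec η p u n wn →
      (m < n → precLt wm wn) ∧ (m ≠ n → wm ≠ wn) := by
  obtain ⟨hne, -⟩ := hη
  obtain ⟨hp, hR, hL, -, -⟩ := hu
  have hx : ∃ t, iterW η p [u 0] = u 0 :: t := head_fact hne hR
  have hb : ∃ s, iterW η p [u (-1)] = s ++ [u (-1)] := last_fact hne hL
  have key : ∀ (m n : ℤ) (wm wn : List ℕ), RepSpec η p u m wm →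
      RepSpec η p u n wn → m < n → precLt wm wn := by
    intro m n wm wn hm hn hmn
    rcases hm with ⟨hm0, rfl⟩ | ⟨hm1, rfl⟩ | ⟨hm2, k1, mm1, aa1, hq1, rfl⟩ |
      ⟨hm3, k1, mm1, aa1, hq1, rfl⟩ <;>
    rcases hn with ⟨hn0, rfl⟩ | ⟨hn1, rfl⟩ | ⟨hn2, k2, mm2, aa2, hq2, rfl⟩ |
      ⟨hn3, k2, mm2, aa2, hq2, rfl⟩
    · omega
    · omega
    · -- m = 0, n positive
      refine Or.inr (Or.inl ⟨rfl, rfl, Or.inl ?_⟩)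
      have hk2 := hq2.2.1
      simp only [List.length_cons, List.length_nil, dtDigits_length]
      omega
    · omega
    · exact Or.inl ⟨rfl, rfl⟩
    · omega
    · exact Or.inl ⟨rfl, rfl⟩
    · omega
    · omega
    · omega
    · exact Or.inr (Or.inl ⟨rfl, rfl, pos_main hne hp hx hq1 hq2 hmn⟩)
    · omega
    · exact Or.inl ⟨rfl, rfl⟩
    · -- m ≤ -2, n = -1
      refine Or.inr (Or.inr ⟨rfl, rfl, Or.inl ?_⟩)
      have hk1 := hq1.2.1
      simp only [List.length_cons, List.length_nil, dtDigits_length]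
      omega
    · exact Or.inl ⟨rfl, rfl⟩
    · exact Or.inr (Or.inr ⟨rfl, rfl, neg_main hne hp hb hq1 hq2 hmn⟩)
  intro m n wm wn hm hn
  refine ⟨key m n wm wn hm hn, ?_⟩
  intro hmn heq
  rcases lt_trichotomy m n with h | h | h
  · exact precLt_irrefl wn (heq ▸ key m n wm wn hm hn h)
  · exact hmn h
  · exact precLt_irrefl wn (heq ▸ key n m wn wm hn hm h)
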